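/- Let E be an exponential family on X with normal space N, and let Y be a subset of X with ∅ ≠ Y ≠ X. If every circuit vector c ∈ N satisfies supp(c) ⊆ Y or supp(c) ⊆ X∖Y, then the topological closure of E (in ℝ^X) equals the set of all probability distributions of the form λ·P₁ + (1−λ)·P₂, where λ ∈ [0,1], P₁ lies in the closure of E and is supported on Y, and P₂ lies in the closure of E and is supported on X∖Y. -/

import Mathlib

open scoped BigOperators Classical

noncomputable section

variable {X : Type*}

/-- A probability distribution on a finite set `X`. -/
def IsProb [Fintype X] (P : X → ℝ) : Prop :=
  (∀ x, 0 ≤ P x) ∧ ∑ x, P x = 1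

/-- Information divergence `D(P‖Q)` with values in `EReal`, equal to `⊤` if the
support of `P` is not contained in the support of `Q`.  (The convention
`0 · log 0 = 0` holds automatically since `Real.log 0 = 0`.) -/
def KL [Fintype X] (P Q : X → ℝ) : EReal :=
  if ∀ x, Q x = 0 → P x = 0 then ((∑ x, P x * Real.log (P x / Q x) : ℝ) : EReal) else ⊤

/-- The exponential family with strictly positive reference measure `ν` and extended
tangent space `T` (a subspace of `ℝ^X` containing the constants): the set of strictly
positive probability distributions `P` with `log (P/ν) ∈ T`. -/
def expFam [Fintype X] (ν : X → ℝ) (T : Submodule ℝ (X → ℝ)) : Set (X → ℝ) :=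
  {P | (∀ x, 0 < P x) ∧ ∑ x, P x = 1 ∧ (fun x => Real.log (P x / ν x)) ∈ T}

/-- `sup_P inf_{Q ∈ E} D(P‖Q)`, supremum over all probability distributions `P`. -/
def maxDiv [Fintype X] (E : Set (X → ℝ)) : EReal :=
  ⨆ P ∈ {P : X → ℝ | IsProb P}, ⨅ Q ∈ E, KL P Q

/-- The orthogonal complement of `T` in `ℝ^X` w.r.t. the standard inner product
(the normal space of the exponential family with extended tangent space `T`). -/
def orthSpace [Fintype X] (T : Submodule ℝ (X → ℝ)) : Set (X → ℝ) :=
  {u | ∀ t ∈ T, ∑ x, u x * t x = 0}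

/-- A circuit vector of a set `N ⊆ ℝ^X`: a nonzero element whose support is minimal,
i.e. every `u ∈ N` with `supp u ⊆ supp v` is a scalar multiple of `v`. -/
def IsCircuitVector (N : Set (X → ℝ)) (v : X → ℝ) : Prop :=
  v ∈ N ∧ v ≠ 0 ∧ ∀ u ∈ N, Function.support u ⊆ Function.support v → ∃ α : ℝ, u = α • v

/-- A circuit of `N`: the support of a circuit vector. -/
def IsCircuit (N : Set (X → ℝ)) (σ : Set X) : Prop :=
  ∃ v, IsCircuitVector N v ∧ σ = Function.support v

/-- The closed partition model of the partition given by the equivalence relation `r`: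
all probability distributions constant on each block. -/
def partModel [Fintype X] (r : X → X → Prop) : Set (X → ℝ) :=
  {Q | IsProb Q ∧ ∀ x y, r x y → Q x = Q y}

/-- The partition exponential family of the partition given by the equivalence
relation `r`: all strictly positive probability distributions constant on each block. -/
def partExpFam [Fintype X] (r : X → X → Prop) : Set (X → ℝ) :=
  {P | (∀ x, 0 < P x) ∧ ∑ x, P x = 1 ∧ ∀ x y, r x y → P x = P y}

/-- The set `X̲` of points not annihilated by all of `N`. -/
def underlineSet (N : Set (X → ℝ)) : Set X := {x | ∃ v ∈ N, v x ≠ 0}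

/-- The relation `x ∼ y` : every `v ∈ N` with `v x ≠ 0` has `v y ≠ 0`. -/
def coRel (N : Set (X → ℝ)) (x y : X) : Prop := ∀ v ∈ N, v x ≠ 0 → v y ≠ 0

/-- `Z` is an equivalence class of `∼` on `X̲`. -/
def IsClassOf (N : Set (X → ℝ)) (Z : Set X) : Prop :=
  ∃ x ∈ underlineSet N, Z = {y | coRel N x y}

end


-- ===================== Auxiliary development =====================

noncomputable section Aux

open Function Filter Topology

variable {X : Type*} [Fintype X]

/-- Restriction of a function to a set (extended by zero). -/
def mask (Y : Set X) (u : X → ℝ) : X → ℝ := fun x => if x ∈ Y then u x else 0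

theorem mask_split (Y : Set X) (f : X → ℝ) :
    ∑ x, mask Y f x + ∑ x, mask Yᶜ f x = ∑ x, f x := by
  rw [← Finset.sum_add_distrib]
  apply Finset.sum_congr rfl
  intro x _
  by_cases hx : x ∈ Y <;> simp [mask, hx]

theorem mask_sum_pos {Y : Set X} (hY : Y.Nonempty) {Q : X → ℝ} (hQ : ∀ x, 0 < Q x) :
    0 < ∑ x, mask Y Q x := by
  obtain ⟨z, hz⟩ := hY
  apply Finset.sum_pos'
  · intro x _; by_cases hx : x ∈ Y <;> simp [mask, hx, (hQ x).le]
  · exact ⟨z, Finset.mem_univ z, by simp [mask, hz, hQ z]⟩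

theorem mask_sum_nonneg {Y : Set X} {Q : X → ℝ} (hQ : ∀ x, 0 ≤ Q x) :
    0 ≤ ∑ x, mask Y Q x := by
  apply Finset.sum_nonneg
  intro x _; by_cases hx : x ∈ Y <;> simp [mask, hx, hQ x]

theorem dblOrth (T : Submodule ℝ (X → ℝ)) (f : X → ℝ)
    (hf : ∀ u : X → ℝ, (∀ t ∈ T, ∑ x, u x * t x = 0) → ∑ x, u x * f x = 0) : f ∈ T := by
  let e : (X → ℝ) ≃ₗ[ℝ] EuclideanSpace ℝ X := (WithLp.linearEquiv 2 ℝ (X → ℝ)).symm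
  let T' : Submodule ℝ (EuclideanSpace ℝ X) := T.map (e : (X → ℝ) →ₗ[ℝ] EuclideanSpace ℝ X)
  have hmem : ∀ g : X → ℝ, e g ∈ T' ↔ g ∈ T := by
    intro g
    constructor
    · rintro ⟨t, ht, hte⟩
      have : t = g := e.injective hte
      rwa [← this]
    · intro hg; exact ⟨g, hg, rfl⟩
  have hinner : ∀ (u v : X → ℝ), (inner ℝ (e u) (e v) : ℝ) = ∑ x, u x * v x := by
    intro u v
    rw [PiLp.inner_apply]
    simp [RCLike.inner_apply, e, mul_comm]
  have hsymm : ∀ v : EuclideanSpace ℝ X, v = e (e.symm v) := fun v => (e.apply_symm_apply v).symm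
  have horth : ∀ v : EuclideanSpace ℝ X, v ∈ T'ᗮ ↔ (∀ t ∈ T, ∑ x, (e.symm v) x * t x = 0) := by
    intro v
    rw [Submodule.mem_orthogonal]
    constructor
    · intro hv t ht
      have h2 := hv (e t) ((hmem t).2 ht)
      rw [hsymm v, hinner t (e.symm v)] at h2
      rw [← h2]
      exact Finset.sum_congr rfl fun x _ => mul_comm _ _
    · intro h w hw
      obtain ⟨t, ht, rfl⟩ := hw
      have hgoal : (inner ℝ (e t) v : ℝ) = 0 := by
        rw [hsymm v, hinner t (e.symm v), ← h t ht]
        exact Finset.sum_congr rfl fun x _ => mul_comm _ _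
      exact hgoal
  have key : e f ∈ T'ᗮᗮ := by
    rw [Submodule.mem_orthogonal]
    intro v hv
    rw [hsymm v, hinner (e.symm v) f]
    exact hf _ ((horth v).1 hv)
  rw [Submodule.orthogonal_orthogonal] at key
  exact (hmem f).1 key

variable {T : Submodule ℝ (X → ℝ)}

theorem orth_zero : (0 : X → ℝ) ∈ orthSpace T := by
  intro t ht; simp

theorem orth_sub {u v : X → ℝ} (hu : u ∈ orthSpace T) (hv : v ∈ orthSpace T) :
    u - v ∈ orthSpace T := by
  intro t ht
  simp only [Pi.sub_apply, sub_mul, Finset.sum_sub_distrib, hu t ht, hv t ht, sub_zero]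

theorem orth_add {u v : X → ℝ} (hu : u ∈ orthSpace T) (hv : v ∈ orthSpace T) :
    u + v ∈ orthSpace T := by
  intro t ht
  simp only [Pi.add_apply, add_mul, Finset.sum_add_distrib, hu t ht, hv t ht, add_zero]

theorem orth_smul {u : X → ℝ} (α : ℝ) (hu : u ∈ orthSpace T) : α • u ∈ orthSpace T := by
  intro t ht
  simp only [Pi.smul_apply, smul_eq_mul, mul_assoc, ← Finset.mul_sum, hu t ht, mul_zero]

theorem exists_circuitVector {u : X → ℝ} (hu : u ∈ orthSpace T) (hne : u ≠ 0) :
    ∃ v, IsCircuitVector (orthSpace T) v ∧ support v ⊆ support u := by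
  set C : Set ℕ :=
    {n | ∃ v, v ∈ orthSpace T ∧ v ≠ 0 ∧ support v ⊆ support u ∧ (support v).toFinset.card = n}
    with hC
  have hCne : C.Nonempty := ⟨_, u, hu, hne, subset_rfl, rfl⟩
  obtain ⟨v, hvN, hv0, hvsub, hvcard⟩ := Nat.sInf_mem hCne
  have hmin : ∀ w : X → ℝ, w ∈ orthSpace T → w ≠ 0 → support w ⊆ support u →
      sInf C ≤ (support w).toFinset.card := fun w h1 h2 h3 => Nat.sInf_le ⟨w, h1, h2, h3, rfl⟩
  refine ⟨v, ⟨hvN, hv0, ?_⟩, hvsub⟩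
  intro w hwN hwsub
  by_cases hw0 : w = 0
  · exact ⟨0, by simp [hw0]⟩
  have hsuppeq : support w = support v := by
    have hsub : (support w).toFinset ⊆ (support v).toFinset := by
      intro x hx
      simp only [Set.mem_toFinset] at *
      exact hwsub hx
    have hcard : (support v).toFinset.card ≤ (support w).toFinset.card := by
      rw [hvcard]; exact hmin w hwN hw0 (hwsub.trans hvsub)
    have := Finset.eq_of_subset_of_card_le hsub hcard
    have h2 := congrArg (fun s : Finset X => (s : Set X)) this
    simpa [Set.coe_toFinset] using h2
  obtain ⟨x, hx⟩ := Function.ne_iff.1 hv0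
  have hxv : x ∈ support v := hx
  have hxw : w x ≠ 0 := by rw [← Function.mem_support, hsuppeq]; exact hxv
  refine ⟨w x / v x, ?_⟩
  by_contra hne2
  have hz : w - (w x / v x) • v ∈ orthSpace T := orth_sub hwN (orth_smul _ hvN)
  have hzne : w - (w x / v x) • v ≠ 0 := fun h => hne2 (by rw [sub_eq_zero] at h; exact h)
  have hzsub : support (w - (w x / v x) • v) ⊆ support v := by
    intro y hy
    by_contra hyv
    have hvy : v y = 0 := Function.notMem_support.1 hyv
    have hwy : w y = 0 := by
      rw [← Function.notMem_support, hsuppeq]; exact hyv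
    simp [Function.mem_support, Pi.sub_apply, hvy, hwy] at hy
  have hvx : v x ≠ 0 := hxv
  have hzx : (w - (w x / v x) • v) x = 0 := by
    simp only [Pi.sub_apply, Pi.smul_apply, smul_eq_mul]
    rw [div_mul_cancel₀ _ hvx, sub_self]
  have hcard2 : (support (w - (w x / v x) • v)).toFinset.card < (support v).toFinset.card := by
    apply Finset.card_lt_card
    rw [Finset.ssubset_iff_of_subset]
    · exact ⟨x, by simpa [Set.mem_toFinset] using hxv,
        by simp [Set.mem_toFinset, Function.mem_support, hzx]⟩
    · intro y hy; simp only [Set.mem_toFinset] at *; exact hzsub hy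
  have := hmin _ hz hzne (hzsub.trans hvsub)
  omega

theorem mask_mem_orth (Y : Set X)
    (hcirc : ∀ c : X → ℝ, IsCircuitVector (orthSpace T) c →
      Function.support c ⊆ Y ∨ Function.support c ⊆ Yᶜ) :
    ∀ u ∈ orthSpace T, mask Y u ∈ orthSpace T := by
  suffices h : ∀ n : ℕ, ∀ u ∈ orthSpace T, (support u).toFinset.card ≤ n →
      mask Y u ∈ orthSpace T by
    intro u hu; exact h _ u hu le_rfl
  intro n
  induction n with
  | zero =>
    intro u hu hcard
    have : u = 0 := by
      funext x
      by_contra hx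
      have : x ∈ (support u).toFinset := by simpa [Set.mem_toFinset] using hx
      have := Finset.card_pos.2 ⟨x, this⟩
      omega
    have : mask Y u = 0 := by funext x; simp [mask, this]
    rw [this]; exact orth_zero
  | succ n ih =>
    intro u hu hcard
    by_cases h0 : u = 0
    · have : mask Y u = 0 := by funext x; simp [mask, h0]
      rw [this]; exact orth_zero
    obtain ⟨c, hc, hcsub⟩ := exists_circuitVector hu h0
    obtain ⟨x, hx⟩ := Function.ne_iff.1 hc.2.1
    have hxc : x ∈ support c := hx
    set α := u x / c x with hα
    set u' := u - α • c with hu'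
    have hu'N : u' ∈ orthSpace T := orth_sub hu (orth_smul _ hc.1)
    have hu'sub : support u' ⊆ support u := by
      intro y hy
      by_contra hyu
      have huy : u y = 0 := Function.notMem_support.1 hyu
      have hcy : c y = 0 := Function.notMem_support.1 fun hcy => hyu (hcsub hcy)
      simp [hu', Function.mem_support, huy, hcy] at hy
    have hcx : c x ≠ 0 := hxc
    have hu'x : u' x = 0 := by
      simp only [hu', Pi.sub_apply, Pi.smul_apply, smul_eq_mul, hα]
      rw [div_mul_cancel₀ _ hcx, sub_self]
    have hxu : x ∈ support u := hcsub hxc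
    have hcard' : (support u').toFinset.card ≤ n := by
      have hlt : (support u').toFinset.card < (support u).toFinset.card := by
        apply Finset.card_lt_card
        rw [Finset.ssubset_iff_of_subset]
        · exact ⟨x, by simpa [Set.mem_toFinset] using hxu,
            by simp [Set.mem_toFinset, Function.mem_support, hu'x]⟩
        · intro y hy; simp only [Set.mem_toFinset] at *; exact hu'sub hy
      omega
    have ihm := ih u' hu'N hcard'
    rcases hcirc c hc with hY | hYc
    · have : mask Y u = mask Y u' + α • c := by
        funext y
        by_cases hy : y ∈ Y
        · simp only [mask, hu', if_pos hy, Pi.add_apply, Pi.sub_apply, Pi.smul_apply,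
            smul_eq_mul]
          ring
        · have hcy : c y = 0 := Function.notMem_support.1 fun h => hy (hY h)
          simp [mask, hy, hcy]
      rw [this]; exact orth_add ihm (orth_smul _ hc.1)
    · have : mask Y u = mask Y u' := by
        funext y
        by_cases hy : y ∈ Y
        · have hcy : c y = 0 := Function.notMem_support.1 fun h => (hYc h) hy
          simp [mask, hy, hu', hcy]
        · simp [mask, hy]
      rw [this]; exact ihm

theorem mask_mem_T {Y : Set X}
    (hcirc : ∀ c : X → ℝ, IsCircuitVector (orthSpace T) c →
      Function.support c ⊆ Y ∨ Function.support c ⊆ Yᶜ)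
    {t : X → ℝ} (ht : t ∈ T) : mask Y t ∈ T := by
  apply dblOrth
  intro u hu
  have h2 : mask Y u ∈ orthSpace T := mask_mem_orth Y hcirc u hu
  have h3 : ∑ x, u x * mask Y t x = ∑ x, mask Y u x * t x :=
    Finset.sum_congr rfl fun x _ => by by_cases hx : x ∈ Y <;> simp [mask, hx]
  rw [h3]; exact h2 t ht

theorem closure_isProb {ν : X → ℝ} {P : X → ℝ}
    (hP : P ∈ closure (expFam ν T)) : (∀ x, 0 ≤ P x) ∧ ∑ x, P x = 1 := by
  have hclosed : IsClosed {P : X → ℝ | (∀ x, 0 ≤ P x) ∧ ∑ x, P x = 1} := by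
    have e1 : {P : X → ℝ | (∀ x, 0 ≤ P x) ∧ ∑ x, P x = 1}
        = (⋂ x, {P : X → ℝ | 0 ≤ P x}) ∩ {P : X → ℝ | ∑ x, P x = 1} := by
      ext P; simp [Set.mem_iInter]
    rw [e1]
    exact IsClosed.inter
      (isClosed_iInter fun x => isClosed_le continuous_const (continuous_apply x))
      (isClosed_eq (continuous_finset_sum _ fun x _ => continuous_apply x) continuous_const)
  have hsub : expFam ν T ⊆ {P : X → ℝ | (∀ x, 0 ≤ P x) ∧ ∑ x, P x = 1} := by
    rintro Q ⟨h1, h2, _⟩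
    exact ⟨fun x => (h1 x).le, h2⟩
  exact closure_minimal hsub hclosed hP

theorem base_mem_expFam (ν : X → ℝ) (hν : ∀ x, 0 < ν x) [Nonempty X]
    (h1 : (fun _ => (1 : ℝ)) ∈ T) :
    (fun x => ν x / ∑ y, ν y) ∈ expFam ν T := by
  have hS : 0 < ∑ y, ν y := Finset.sum_pos (fun y _ => hν y) Finset.univ_nonempty
  refine ⟨fun x => div_pos (hν x) hS, ?_, ?_⟩
  · rw [← Finset.sum_div, div_self hS.ne']
  · have : (fun x => Real.log (ν x / (∑ y, ν y) / ν x)) =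
        (-Real.log (∑ y, ν y)) • (fun _ => (1 : ℝ)) := by
      funext x
      have : ν x / (∑ y, ν y) / ν x = (∑ y, ν y)⁻¹ := by
        rw [div_div, mul_comm, ← div_div, div_self (hν x).ne', one_div]
      rw [this]
      simp [Real.log_inv]
    rw [this]
    exact T.smul_mem _ h1

theorem cond_mem_closure (ν : X → ℝ) (hν : ∀ x, 0 < ν x)
    (h1 : (fun _ => (1 : ℝ)) ∈ T)
    (Z : Set X) (hZne : Z.Nonempty) (hZT : mask Z (fun _ => (1 : ℝ)) ∈ T)
    {Q : X → ℝ} (hQ : Q ∈ expFam ν T) :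
    (fun x => if x ∈ Z then Q x / (∑ y, mask Z Q y) else 0) ∈ closure (expFam ν T) := by
  obtain ⟨hQpos, hQsum, hQlog⟩ := hQ
  set m := ∑ y, mask Z Q y with hm
  set r := ∑ y, mask Zᶜ Q y with hr
  have hmpos : 0 < m := mask_sum_pos hZne hQpos
  have hrpos : 0 ≤ r := mask_sum_nonneg fun x => (hQpos x).le
  set D : ℕ → ℝ := fun n => Real.exp n * m + r with hD
  have hDpos : ∀ n, 0 < D n := fun n =>
    add_pos_of_pos_of_nonneg (mul_pos (Real.exp_pos _) hmpos) hrpos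
  set Qs : ℕ → X → ℝ := fun n x => Q x * (if x ∈ Z then Real.exp n else 1) / D n with hQs
  have hmem : ∀ n, Qs n ∈ expFam ν T := by
    intro n
    refine ⟨?_, ?_, ?_⟩
    · intro x
      apply div_pos _ (hDpos n)
      by_cases hx : x ∈ Z <;> simp [hx, mul_pos (hQpos x), Real.exp_pos, hQpos x]
    · rw [← Finset.sum_div]
      rw [show ∑ x, Q x * (if x ∈ Z then Real.exp n else 1) = D n by
        rw [hD]
        have : ∀ x, Q x * (if x ∈ Z then Real.exp n else 1)
            = Real.exp n * mask Z Q x + mask Zᶜ Q x := by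
          intro x; by_cases hx : x ∈ Z <;> simp [mask, hx] <;> ring
        rw [Finset.sum_congr rfl fun x _ => this x, Finset.sum_add_distrib, ← Finset.mul_sum]]
      exact div_self (hDpos n).ne'
    · have heq : (fun x => Real.log (Qs n x / ν x)) =
          (fun x => Real.log (Q x / ν x)) + (n : ℝ) • mask Z (fun _ => (1:ℝ))
            + (-Real.log (D n)) • (fun _ => (1 : ℝ)) := by
        funext x
        have hQν : Q x / ν x ≠ 0 := (div_pos (hQpos x) (hν x)).ne'
        by_cases hx : x ∈ Z
        · have : Qs n x / ν x = (Q x / ν x) * Real.exp n / D n := by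
            simp only [hQs, if_pos hx]; ring
          rw [this, Real.log_div (by positivity) (hDpos n).ne',
            Real.log_mul hQν (Real.exp_ne_zero _), Real.log_exp]
          simp [mask, hx]
          ring
        · have : Qs n x / ν x = (Q x / ν x) / D n := by
            simp only [hQs, if_neg hx]; ring
          rw [this, Real.log_div hQν (hDpos n).ne']
          simp [mask, hx]
          ring
      rw [heq]
      exact T.add_mem (T.add_mem hQlog (T.smul_mem _ hZT)) (T.smul_mem _ h1)
  have htend : Tendsto Qs atTop (𝓝 (fun x => if x ∈ Z then Q x / m else 0)) := by
    rw [tendsto_pi_nhds]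
    intro x
    have hrw : ∀ n : ℕ, Qs n x
        = Q x * (if x ∈ Z then 1 else Real.exp (-(n:ℝ))) / (m + r * Real.exp (-(n:ℝ))) := by
      intro n
      have hen : Real.exp (-(n:ℝ)) = (Real.exp (n:ℝ))⁻¹ := Real.exp_neg _
      have hexp : Real.exp (n:ℝ) ≠ 0 := Real.exp_ne_zero _
      by_cases hx : x ∈ Z <;> simp only [hQs, hD, hen, hx, if_true, if_false] <;>
        rw [div_eq_div_iff (by positivity) (by have := hmpos; have := hrpos; positivity)] <;>
        field_simp <;> try ring
    have hetend : Tendsto (fun n : ℕ => Real.exp (-(n:ℝ))) atTop (𝓝 0) :=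
      Real.tendsto_exp_neg_atTop_nhds_zero.comp tendsto_natCast_atTop_atTop
    have hnum : Tendsto (fun n : ℕ => Q x * (if x ∈ Z then 1 else Real.exp (-(n:ℝ)))) atTop
        (𝓝 (Q x * (if x ∈ Z then 1 else 0))) := by
      by_cases hx : x ∈ Z
      · simp only [if_pos hx]; exact tendsto_const_nhds
      · simp only [if_neg hx]; exact (tendsto_const_nhds).mul hetend
    have hden : Tendsto (fun n : ℕ => m + r * Real.exp (-(n:ℝ))) atTop (𝓝 m) := by
      have h2 := (tendsto_const_nhds (x := m)).add ((tendsto_const_nhds (x := r)).mul hetend)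
      simpa using h2
    have hdiv := hnum.div hden hmpos.ne'
    simp only [hrw]
    convert hdiv using 2
    all_goals by_cases hx : x ∈ Z <;> simp [hx]
  exact mem_closure_of_tendsto htend (Eventually.of_forall hmem)

theorem cond_limit_mem (ν : X → ℝ) (hν : ∀ x, 0 < ν x)
    (h1 : (fun _ => (1 : ℝ)) ∈ T)
    (Z : Set X) (hZne : Z.Nonempty) (hZT : mask Z (fun _ => (1 : ℝ)) ∈ T)
    {P : X → ℝ} (hP : P ∈ closure (expFam ν T)) (hmz : ∑ y, mask Z P y ≠ 0) :
    (fun x => if x ∈ Z then P x / (∑ y, mask Z P y) else 0) ∈ closure (expFam ν T) := by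
  obtain ⟨Qn, hQmem, hQtend⟩ := mem_closure_iff_seq_limit.1 hP
  have hC : ∀ n, (fun x => if x ∈ Z then Qn n x / (∑ y, mask Z (Qn n) y) else 0)
      ∈ closure (expFam ν T) :=
    fun n => cond_mem_closure ν hν h1 Z hZne hZT (hQmem n)
  have hqt : Tendsto (fun n => ∑ y, mask Z (Qn n) y) atTop (𝓝 (∑ y, mask Z P y)) := by
    apply tendsto_finset_sum
    intro x _
    by_cases hx : x ∈ Z
    · simp only [mask, if_pos hx]
      exact tendsto_pi_nhds.1 hQtend x
    · simp only [mask, if_neg hx]; exact tendsto_const_nhds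
  have htend : Tendsto (fun n => (fun x => if x ∈ Z then Qn n x / (∑ y, mask Z (Qn n) y) else 0))
      atTop (𝓝 (fun x => if x ∈ Z then P x / (∑ y, mask Z P y) else 0)) := by
    rw [tendsto_pi_nhds]
    intro x
    by_cases hx : x ∈ Z
    · simp only [if_pos hx]
      exact (tendsto_pi_nhds.1 hQtend x).div hqt hmz
    · simp only [if_neg hx]; exact tendsto_const_nhds
  have hfin := mem_closure_of_tendsto htend (Eventually.of_forall hC)
  rwa [closure_closure] at hfin

theorem mix_mem_closure [Nonempty X] (ν : X → ℝ) (hν : ∀ x, 0 < ν x)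
    (h1 : (fun _ => (1 : ℝ)) ∈ T)
    (Y : Set X) (hY1 : Y.Nonempty) (hY2 : Y ≠ Set.univ)
    (hmaskT : ∀ t ∈ T, mask Y t ∈ T)
    (lam : ℝ) (hlam : lam ∈ Set.Icc (0:ℝ) 1) (P₁ P₂ : X → ℝ)
    (h₁ : P₁ ∈ closure (expFam ν T)) (hs₁ : Function.support P₁ ⊆ Y)
    (h₂ : P₂ ∈ closure (expFam ν T)) (hs₂ : Function.support P₂ ⊆ Yᶜ) :
    lam • P₁ + (1 - lam) • P₂ ∈ closure (expFam ν T) := by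
  have hYc : Yᶜ.Nonempty := Set.nonempty_compl.2 hY2
  have hYT : mask Y (fun _ => (1:ℝ)) ∈ T := hmaskT _ h1
  have hYcT : mask Yᶜ (fun _ => (1:ℝ)) ∈ T := by
    have hmm : mask Yᶜ (fun _ => (1:ℝ)) = (fun _ => (1:ℝ)) - mask Y (fun _ => (1:ℝ)) := by
      funext x; by_cases hx : x ∈ Y <;> simp [mask, hx]
    rw [hmm]; exact T.sub_mem h1 hYT
  obtain ⟨Qn, hQmem, hQtend⟩ := mem_closure_iff_seq_limit.1 h₁
  obtain ⟨Rn, hRmem, hRtend⟩ := mem_closure_iff_seq_limit.1 h₂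
  set μ : ℕ → ℝ := fun n => (lam * n + 1/2)/((n:ℝ)+1) with hμ
  have hn1 : ∀ n : ℕ, (0:ℝ) < (n:ℝ)+1 := fun n => by positivity
  have hμ0 : ∀ n, 0 < μ n := by
    intro n
    apply div_pos _ (hn1 n)
    have : 0 ≤ lam * n := mul_nonneg hlam.1 (Nat.cast_nonneg n)
    linarith
  have hμ1 : ∀ n, μ n < 1 := by
    intro n
    rw [hμ]
    rw [div_lt_one (hn1 n)]
    nlinarith [hlam.2, Nat.cast_nonneg (α := ℝ) n, hlam.1]
  have hμtend : Tendsto μ atTop (𝓝 lam) := by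
    have heq : ∀ n : ℕ, μ n = lam + (1/2 - lam)/((n:ℝ)+1) := by
      intro n
      rw [hμ]
      have hne := (hn1 n).ne'
      field_simp
      ring
    have h0 : Tendsto (fun n : ℕ => lam + (1/2 - lam)/((n:ℝ)+1)) atTop (𝓝 (lam + 0)) :=
      tendsto_const_nhds.add (Tendsto.div_atTop tendsto_const_nhds
        (tendsto_atTop_add_const_right _ 1 tendsto_natCast_atTop_atTop))
    rw [add_zero] at h0
    exact Tendsto.congr (fun n => (heq n).symm) h0
  set q : ℕ → ℝ := fun n => ∑ x, mask Y (Qn n) x with hq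
  set r : ℕ → ℝ := fun n => ∑ x, mask Yᶜ (Rn n) x with hr
  have hqpos : ∀ n, 0 < q n := fun n => mask_sum_pos hY1 (hQmem n).1
  have hrpos : ∀ n, 0 < r n := fun n => mask_sum_pos hYc (hRmem n).1
  set S : ℕ → X → ℝ := fun n x => if x ∈ Y then μ n * Qn n x / q n
      else (1 - μ n) * Rn n x / r n with hS
  have hSmem : ∀ n, S n ∈ expFam ν T := by
    intro n
    obtain ⟨hQp, hQs2, hQl⟩ := hQmem n
    obtain ⟨hRp, hRs2, hRl⟩ := hRmem n
    refine ⟨?_, ?_, ?_⟩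
    · intro x
      by_cases hx : x ∈ Y
      · simp only [hS, if_pos hx]
        exact div_pos (mul_pos (hμ0 n) (hQp x)) (hqpos n)
      · simp only [hS, if_neg hx]
        exact div_pos (mul_pos (by linarith [hμ1 n]) (hRp x)) (hrpos n)
    · have hterm : ∀ x, S n x = (μ n / q n) * mask Y (Qn n) x
          + ((1 - μ n) / r n) * mask Yᶜ (Rn n) x := by
        intro x
        by_cases hx : x ∈ Y <;> simp [hS, mask, hx] <;> ring
      rw [Finset.sum_congr rfl fun x _ => hterm x, Finset.sum_add_distrib,
        ← Finset.mul_sum, ← Finset.mul_sum,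
        show (∑ i, mask Y (Qn n) i) = q n from rfl,
        show (∑ i, mask Yᶜ (Rn n) i) = r n from rfl,
        div_mul_cancel₀ _ (hqpos n).ne', div_mul_cancel₀ _ (hrpos n).ne']
      ring
    · have heq : (fun x => Real.log (S n x / ν x))
          = mask Y (fun x => Real.log (Qn n x / ν x))
            + mask Yᶜ (fun x => Real.log (Rn n x / ν x))
            + (Real.log (μ n / q n)) • mask Y (fun _ => (1:ℝ))
            + (Real.log ((1 - μ n) / r n)) • mask Yᶜ (fun _ => (1:ℝ)) := by
        funext x
        by_cases hx : x ∈ Y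
        · have hQν : Qn n x / ν x ≠ 0 := (div_pos (hQp x) (hν x)).ne'
          have h3 : S n x / ν x = (Qn n x / ν x) * (μ n / q n) := by
            simp only [hS, if_pos hx]; ring
          have h4 : x ∉ Yᶜ := by simp [hx]
          simp only [Pi.add_apply, Pi.smul_apply, smul_eq_mul, mask, if_pos hx, if_neg h4]
          rw [h3, Real.log_mul hQν (div_pos (hμ0 n) (hqpos n)).ne']
          ring
        · have hRν : Rn n x / ν x ≠ 0 := (div_pos (hRp x) (hν x)).ne'
          have h3 : S n x / ν x = (Rn n x / ν x) * ((1 - μ n) / r n) := by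
            simp only [hS, if_neg hx]; ring
          have h4 : x ∈ Yᶜ := hx
          simp only [Pi.add_apply, Pi.smul_apply, smul_eq_mul, mask, if_neg hx, if_pos h4]
          rw [h3, Real.log_mul hRν
            (div_pos (by linarith [hμ1 n]) (hrpos n)).ne']
          ring
      rw [heq]
      refine T.add_mem (T.add_mem (T.add_mem ?_ ?_) (T.smul_mem _ hYT)) (T.smul_mem _ hYcT)
      · exact hmaskT _ hQl
      · have hmm : mask Yᶜ (fun x => Real.log (Rn n x / ν x))
            = (fun x => Real.log (Rn n x / ν x)) - mask Y (fun x => Real.log (Rn n x / ν x)) := by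
          funext x; by_cases hx : x ∈ Y <;> simp [mask, hx]
        rw [hmm]; exact T.sub_mem hRl (hmaskT _ hRl)
  have hP₁sum : ∑ x, mask Y P₁ x = 1 := by
    have hmeq : mask Y P₁ = P₁ := by
      funext x; by_cases hx : x ∈ Y
      · simp [mask, hx]
      · simp [mask, hx, Function.notMem_support.1 fun h => hx (hs₁ h)]
    rw [hmeq]; exact (closure_isProb h₁).2
  have hP₂sum : ∑ x, mask Yᶜ P₂ x = 1 := by
    have hmeq : mask Yᶜ P₂ = P₂ := by
      funext x; by_cases hx : x ∈ Yᶜ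
      · simp [mask, hx]
      · simp [mask, hx, Function.notMem_support.1 fun h => hx (hs₂ h)]
    rw [hmeq]; exact (closure_isProb h₂).2
  have hqt : Tendsto q atTop (𝓝 1) := by
    rw [← hP₁sum]
    apply tendsto_finset_sum
    intro x _
    by_cases hx : x ∈ Y
    · simp only [mask, if_pos hx]
      exact tendsto_pi_nhds.1 hQtend x
    · simp only [mask, if_neg hx]; exact tendsto_const_nhds
  have hrt : Tendsto r atTop (𝓝 1) := by
    rw [← hP₂sum]
    apply tendsto_finset_sum
    intro x _
    by_cases hx : x ∈ Yᶜ
    · simp only [mask, if_pos hx]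
      exact tendsto_pi_nhds.1 hRtend x
    · simp only [mask, if_neg hx]; exact tendsto_const_nhds
  have htend : Tendsto S atTop (𝓝 (lam • P₁ + (1 - lam) • P₂)) := by
    rw [tendsto_pi_nhds]
    intro x
    by_cases hx : x ∈ Y
    · have h2 : P₂ x = 0 := Function.notMem_support.1 fun h => (hs₂ h) hx
      have hval : (lam • P₁ + (1 - lam) • P₂) x = lam * P₁ x / 1 := by
        simp [h2]
      have hlim : Tendsto (fun n => μ n * Qn n x / q n) atTop (𝓝 (lam * P₁ x / 1)) :=
        Tendsto.div (hμtend.mul (tendsto_pi_nhds.1 hQtend x)) hqt one_ne_zero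
      rw [hval]
      refine Tendsto.congr (fun n => ?_) hlim
      simp only [hS, if_pos hx]
    · have h2 : P₁ x = 0 := Function.notMem_support.1 fun h => hx (hs₁ h)
      have hval : (lam • P₁ + (1 - lam) • P₂) x = (1 - lam) * P₂ x / 1 := by
        simp [h2]
      have hlim : Tendsto (fun n => (1 - μ n) * Rn n x / r n) atTop
          (𝓝 ((1 - lam) * P₂ x / 1)) :=
        Tendsto.div ((tendsto_const_nhds.sub hμtend).mul (tendsto_pi_nhds.1 hRtend x)) hrt
          one_ne_zero
      rw [hval]
      refine Tendsto.congr (fun n => ?_) hlim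
      simp only [hS, if_neg hx]
  exact mem_closure_of_tendsto htend (Eventually.of_forall hSmem)

end Aux

/-- if every circuit vector of the normal space has support inside `Y` or
inside `X∖Y`, then the closure of the exponential family is the corresponding mixture. -/
theorem stmt1 (X : Type*) [Fintype X] [Nonempty X]
    (ν : X → ℝ) (hν : ∀ x, 0 < ν x)
    (T : Submodule ℝ (X → ℝ)) (h1 : (fun _ => (1 : ℝ)) ∈ T)
    (Y : Set X) (hY1 : Y.Nonempty) (hY2 : Y ≠ Set.univ)
    (hcirc : ∀ c : X → ℝ, IsCircuitVector (orthSpace T) c →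
      Function.support c ⊆ Y ∨ Function.support c ⊆ Yᶜ) :
    closure (expFam ν T) =
      {P : X → ℝ | ∃ lam : ℝ, lam ∈ Set.Icc (0 : ℝ) 1 ∧ ∃ P₁ P₂ : X → ℝ,
        P₁ ∈ closure (expFam ν T) ∧ Function.support P₁ ⊆ Y ∧
        P₂ ∈ closure (expFam ν T) ∧ Function.support P₂ ⊆ Yᶜ ∧
        P = lam • P₁ + (1 - lam) • P₂} :=  by
  classical
  have hmaskT : ∀ t ∈ T, mask Y t ∈ T := fun t ht => mask_mem_T hcirc ht
  have hYT : mask Y (fun _ => (1:ℝ)) ∈ T := hmaskT _ h1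
  have hYc : Yᶜ.Nonempty := Set.nonempty_compl.2 hY2
  have hYcT : mask Yᶜ (fun _ => (1:ℝ)) ∈ T := by
    have hmm : mask Yᶜ (fun _ => (1:ℝ)) = (fun _ => (1:ℝ)) - mask Y (fun _ => (1:ℝ)) := by
      funext x; by_cases hx : x ∈ Y <;> simp [mask, hx]
    rw [hmm]; exact T.sub_mem h1 hYT
  ext P
  simp only [Set.mem_setOf_eq]
  constructor
  · intro hP
    obtain ⟨hPnn, hPsum⟩ := closure_isProb hP
    set lam := ∑ x, mask Y P x with hlamdef
    have hmc : ∑ x, mask Yᶜ P x = 1 - lam := by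
      have hsplit := mask_split Y P
      rw [hPsum] at hsplit
      linarith
    have hlam0 : 0 ≤ lam := mask_sum_nonneg hPnn
    have hlam1 : lam ≤ 1 := by
      have h2 : 0 ≤ ∑ x, mask Yᶜ P x := mask_sum_nonneg hPnn
      linarith
    have hzero : ∀ (W : Set X), (∑ x, mask W P x = 0) → ∀ x ∈ W, P x = 0 := by
      intro W hW x hx
      have hnn : ∀ y ∈ Finset.univ, (0:ℝ) ≤ mask W P y := fun y _ => by
        by_cases h : y ∈ W <;> simp [mask, h, hPnn y]
      have hterm := (Finset.sum_eq_zero_iff_of_nonneg hnn).1 hW x (Finset.mem_univ x)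
      simpa [mask, hx] using hterm
    have hP₁ : ∃ P₁ : X → ℝ, P₁ ∈ closure (expFam ν T) ∧ Function.support P₁ ⊆ Y ∧
        ∀ x ∈ Y, lam * P₁ x = P x := by
      by_cases hl0 : lam = 0
      · refine ⟨_, cond_mem_closure ν hν h1 Y hY1 hYT (base_mem_expFam ν hν h1), ?_, ?_⟩
        · intro x hx
          by_contra hxY
          simp only [Function.mem_support, if_neg hxY] at hx
          exact hx rfl
        · intro x hx
          rw [hl0, zero_mul]
          exact (hzero Y (by rw [← hlamdef, hl0]) x hx).symm
      · refine ⟨_, cond_limit_mem ν hν h1 Y hY1 hYT hP (by rw [← hlamdef]; exact hl0), ?_, ?_⟩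
        · intro x hx
          by_contra hxY
          simp only [Function.mem_support, if_neg hxY] at hx
          exact hx rfl
        · intro x hx
          simp only [if_pos hx, ← hlamdef]
          rw [mul_div_cancel₀ _ hl0]
    have hP₂ : ∃ P₂ : X → ℝ, P₂ ∈ closure (expFam ν T) ∧ Function.support P₂ ⊆ Yᶜ ∧
        ∀ x ∈ Yᶜ, (1 - lam) * P₂ x = P x := by
      by_cases hl1 : (1:ℝ) - lam = 0
      · refine ⟨_, cond_mem_closure ν hν h1 Yᶜ hYc hYcT (base_mem_expFam ν hν h1), ?_, ?_⟩
        · intro x hx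
          by_contra hxY
          simp only [Function.mem_support, if_neg hxY] at hx
          exact hx rfl
        · intro x hx
          rw [hl1, zero_mul]
          exact (hzero Yᶜ (by rw [hmc, ← hl1]) x hx).symm
      · refine ⟨_, cond_limit_mem ν hν h1 Yᶜ hYc hYcT hP (by rw [hmc]; exact hl1), ?_, ?_⟩
        · intro x hx
          by_contra hxY
          simp only [Function.mem_support, if_neg hxY] at hx
          exact hx rfl
        · intro x hx
          simp only [if_pos hx, hmc]
          rw [mul_div_cancel₀ _ hl1]
    obtain ⟨P₁, h₁c, h₁s, h₁e⟩ := hP₁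
    obtain ⟨P₂, h₂c, h₂s, h₂e⟩ := hP₂
    refine ⟨lam, ⟨hlam0, hlam1⟩, P₁, P₂, h₁c, h₁s, h₂c, h₂s, ?_⟩
    funext x
    simp only [Pi.add_apply, Pi.smul_apply, smul_eq_mul]
    by_cases hx : x ∈ Y
    · have h2 : P₂ x = 0 := Function.notMem_support.1 fun h => (h₂s h) hx
      rw [h2, mul_zero, add_zero, h₁e x hx]
    · have h2 : P₁ x = 0 := Function.notMem_support.1 fun h => hx (h₁s h)
      rw [h2, mul_zero, zero_add, h₂e x hx]
  · rintro ⟨lam, hlam, P₁, P₂, h₁, hs₁, h₂, hs₂, rfl⟩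
    exact mix_mem_closure ν hν h1 Y hY1 hY2 hmaskT lam hlam P₁ P₂ h₁ hs₁ h₂ hs₂
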